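/- There exists a constant C > 0 such that for every natural number p ≥ 1, all real numbers a < b, and every real polynomial f of degree at most p, one has ∫_a^b f'(t)² dt ≤ C · p⁴ · (b − a)^{−2} · ∫_a^b f(t)² dt, where f' denotes the derivative polynomial of f. -/

import Mathlib

open MeasureTheory intervalIntegral Polynomial

namespace Stmt8Aux

noncomputable def I (q : ℝ[X]) : ℝ := ∫ x in (0:ℝ)..1, q.eval x

lemma integrable (q : ℝ[X]) : IntervalIntegrable (fun x => q.eval x) volume 0 1 :=
  q.continuous_aeval.intervalIntegrable 0 1

lemma I_add (q r : ℝ[X]) : I (q + r) = I q + I r := by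
  simp only [I, eval_add]
  exact integral_add (integrable q) (integrable r)

lemma I_smul (c : ℝ) (q : ℝ[X]) : I (C c * q) = c * I q := by
  simp only [I, eval_mul, eval_C]
  exact integral_const_mul c _

lemma I_sum {α : Type*} (s : Finset α) (q : α → ℝ[X]) : I (∑ i ∈ s, q i) = ∑ i ∈ s, I (q i) := by
  classical
  induction s using Finset.induction with
  | empty => simp [I]
  | insert _ _ h ih => rw [Finset.sum_insert h, I_add, ih, Finset.sum_insert h]

lemma I_ftc (q : ℝ[X]) : I (derivative q) = q.eval 1 - q.eval 0 := by
  apply integral_eq_sub_of_hasDerivAt (fun x _ => q.hasDerivAt x) (integrable _)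

lemma I_ibp (q r : ℝ[X]) :
    I (derivative q * r) =
      q.eval 1 * r.eval 1 - q.eval 0 * r.eval 0 - I (q * derivative r) := by
  have h := I_ftc (q * r)
  rw [derivative_mul, I_add] at h
  simp only [eval_mul] at h
  linarith



noncomputable def W (n : ℕ) : ℝ[X] := (X * (X - Polynomial.C 1)) ^ n
noncomputable def L (n : ℕ) : ℝ[X] := derivative^[n] (W n)

lemma W_monic (n : ℕ) : (W n).Monic := ((monic_X).mul (monic_X_sub_C 1)).pow n

lemma W_natDegree (n : ℕ) : (W n).natDegree = 2 * n := by
  have : (X * (X - Polynomial.C (1:ℝ))).natDegree = 2 := by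
    rw [natDegree_mul X_ne_zero (X_sub_C_ne_zero 1), natDegree_X, natDegree_X_sub_C]
  rw [W, natDegree_pow, this, mul_comm]

lemma W_eq (n : ℕ) : W n = X ^ n * (X - Polynomial.C 1) ^ n := by rw [W, mul_pow]

lemma L_natDegree (n : ℕ) : (L n).natDegree ≤ n := by
  have := natDegree_iterate_derivative (W n) n
  rwa [W_natDegree, two_mul, Nat.add_sub_cancel] at this

-- boundary vanishing
lemma W_iter_eval_zero {n j : ℕ} (hj : j < n) : (derivative^[j] (W n)).eval 0 = 0 := by
  have hdvd : (X - Polynomial.C (0:ℝ)) ^ n ∣ W n := by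
    rw [W_eq]; simpa using dvd_mul_right (X ^ n) ((X - Polynomial.C (1:ℝ)) ^ n)
  have h2 := Polynomial.pow_sub_dvd_iterate_derivative_of_pow_dvd j hdvd
  have h3 : (X - Polynomial.C (0:ℝ)) ∣ derivative^[j] (W n) :=
    (dvd_pow_self _ (Nat.sub_ne_zero_of_lt hj)).trans h2
  have := Polynomial.dvd_iff_isRoot.mp h3
  simpa [Polynomial.IsRoot] using this

lemma W_iter_eval_one {n j : ℕ} (hj : j < n) : (derivative^[j] (W n)).eval 1 = 0 := by
  have hdvd : (X - Polynomial.C (1:ℝ)) ^ n ∣ W n := by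
    rw [W_eq]; exact dvd_mul_left _ _
  have h2 := Polynomial.pow_sub_dvd_iterate_derivative_of_pow_dvd j hdvd
  have h3 : (X - Polynomial.C (1:ℝ)) ∣ derivative^[j] (W n) :=
    (dvd_pow_self _ (Nat.sub_ne_zero_of_lt hj)).trans h2
  have := Polynomial.dvd_iff_isRoot.mp h3
  simpa [Polynomial.IsRoot] using this

-- values of L at 0 and 1
lemma L_coeff_zero (n : ℕ) : (L n).coeff 0 = (n.factorial : ℝ) * (-1)^n := by
  rw [L, Polynomial.coeff_iterate_derivative, zero_add, Nat.descFactorial_self]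
  have : (W n).coeff n = (-1 : ℝ)^n := by
    rw [W_eq]
    have := Polynomial.coeff_X_pow_mul ((X - Polynomial.C (1:ℝ)) ^ n) n 0
    rw [zero_add] at this
    rw [this, Polynomial.coeff_zero_eq_eval_zero]
    simp
  rw [this, nsmul_eq_mul]

lemma L_eval_zero (n : ℕ) : (L n).eval 0 = (n.factorial : ℝ) * (-1)^n := by
  rw [← Polynomial.coeff_zero_eq_eval_zero, L_coeff_zero]

lemma iter_deriv_comp_reflect (p : ℝ[X]) (k : ℕ) :
    derivative^[k] (p.comp (Polynomial.C 1 - X)) =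
      (-1)^k * (derivative^[k] p).comp (Polynomial.C 1 - X) := by
  induction k with
  | zero => simp
  | succ k ih =>
    rw [Function.iterate_succ_apply', ih, Function.iterate_succ_apply']
    rw [derivative_mul, Polynomial.derivative_comp]
    have hc : derivative ((-1 : ℝ[X]) ^ k) = 0 := by
      simp [Polynomial.derivative_pow]
    rw [hc]
    simp only [zero_mul, zero_add]
    simp only [Polynomial.derivative_sub, Polynomial.derivative_C, Polynomial.derivative_X,
      zero_sub, pow_succ]
    ring

lemma W_reflect (n : ℕ) : (W n).comp (Polynomial.C 1 - X) = W n := by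
  rw [W, Polynomial.pow_comp]
  congr 1
  have : (X * (X - Polynomial.C (1:ℝ))).comp (Polynomial.C 1 - X)
      = (Polynomial.C 1 - X) * ((Polynomial.C 1 - X) - Polynomial.C 1) := by
    simp [Polynomial.mul_comp, Polynomial.sub_comp]
  rw [this]; ring

lemma L_eval_one (n : ℕ) : (L n).eval 1 = (n.factorial : ℝ) := by
  have h := iter_deriv_comp_reflect (W n) n
  rw [W_reflect] at h
  have := congrArg (Polynomial.eval (1:ℝ)) h
  rw [Polynomial.eval_mul, Polynomial.eval_comp] at this
  simp only [Polynomial.eval_sub, Polynomial.eval_C, Polynomial.eval_X, sub_self] at this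
  rw [show derivative^[n] (W n) = L n from rfl] at this
  rw [Polynomial.eval_pow] at this
  simp only [Polynomial.eval_neg, Polynomial.eval_one] at this
  rw [this, L_eval_zero]
  have : ((-1:ℝ)^n)*((-1:ℝ)^n) = 1 := by
    rw [← pow_add, ← two_mul, pow_mul]; norm_num
  calc (-1:ℝ)^n * (↑n.factorial * (-1)^n) = ↑n.factorial * ((-1:ℝ)^n * (-1)^n) := by ring
  _ = ↑n.factorial := by rw [this, mul_one]

end Stmt8Aux

namespace Stmt8Aux

lemma I_ibp_iter (n : ℕ) (r : ℝ[X]) :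
    ∀ k, k ≤ n → I (L n * r) = (-1)^k * I (derivative^[n-k] (W n) * derivative^[k] r) := by
  intro k
  induction k with
  | zero => intro _; simp [L]
  | succ k ih =>
    intro hk
    have hk' : k ≤ n := Nat.le_of_succ_le hk
    rw [ih hk']
    have hsplit : n - k = (n - (k+1)) + 1 := by omega
    have hiter : derivative^[n-k] (W n) = derivative (derivative^[n-(k+1)] (W n)) := by
      rw [hsplit, Function.iterate_succ_apply']
    rw [hiter]
    rw [I_ibp (derivative^[n-(k+1)] (W n)) (derivative^[k] r)]
    have h0 : (derivative^[n-(k+1)] (W n)).eval 0 = 0 := W_iter_eval_zero (by omega)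
    have h1 : (derivative^[n-(k+1)] (W n)).eval 1 = 0 := W_iter_eval_one (by omega)
    rw [h0, h1, Function.iterate_succ_apply']
    ring

lemma orth {n : ℕ} {r : ℝ[X]} (hr : r.natDegree < n) : I (L n * r) = 0 := by
  rw [I_ibp_iter n r n le_rfl, Polynomial.iterate_derivative_eq_zero hr]
  simp [I]

lemma orth' {j k : ℕ} (h : j ≠ k) : I (L j * L k) = 0 := by
  rcases h.lt_or_gt with hlt | hlt
  · rw [mul_comm]; exact orth (lt_of_le_of_lt (L_natDegree j) hlt)
  · exact orth (lt_of_le_of_lt (L_natDegree k) hlt)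

lemma beta : ∀ k m : ℕ, I (X ^ m * (1 - X) ^ k)
    = (m.factorial : ℝ) * k.factorial / (m + k + 1).factorial := by
  intro k
  induction k with
  | zero =>
    intro m
    have : I (X ^ m * (1 - X) ^ 0) = ∫ x in (0:ℝ)..1, x ^ m := by
      simp [I]
    rw [this, integral_pow]
    have : ((m:ℝ) + 1) ≠ 0 := by positivity
    rw [Nat.factorial_succ]
    push_cast
    field_simp
    try ring
  | succ k ih =>
    intro m
    have hibp := I_ibp (X ^ (m+1)) ((1 - X) ^ (k+1))
    have hd1 : derivative ((X : ℝ[X]) ^ (m+1)) = Polynomial.C ((m:ℝ)+1) * X ^ m := by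
      rw [Polynomial.derivative_X_pow]
      push_cast
      simp
    have hd2 : derivative ((1 - X : ℝ[X]) ^ (k+1))
        = Polynomial.C (-((k:ℝ)+1)) * (1 - X) ^ k := by
      rw [Polynomial.derivative_pow]
      simp only [Polynomial.derivative_sub, Polynomial.derivative_one, Polynomial.derivative_X,
        zero_sub, Nat.add_sub_cancel]
      push_cast
      simp only [map_neg, map_add, map_one]
      ring
    rw [hd1, hd2] at hibp
    simp only [Polynomial.eval_mul, Polynomial.eval_pow, Polynomial.eval_sub,
      Polynomial.eval_one, Polynomial.eval_X, one_pow, sub_self] at hibp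
    norm_num at hibp
    have e1 : ((m : ℝ[X]) + 1) * X ^ m * (1 - X)^(k+1)
        = Polynomial.C ((m:ℝ)+1) * (X ^ m * (1 - X)^(k+1)) := by simp only [map_add, map_one, map_natCast]; ring
    have e2 : (X:ℝ[X]) ^ (m+1) * ((-1 + -(k : ℝ[X])) * (1 - X) ^ k)
        = Polynomial.C (-((k:ℝ)+1)) * (X ^ (m+1) * (1 - X) ^ k) := by simp only [map_neg, map_add, map_one, map_natCast]; ring
    rw [e1, e2, I_smul, I_smul] at hibp
    rw [ih (m+1)] at hibp
    have hm1 : ((m:ℝ) + 1) ≠ 0 := by positivity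
    have key : I (X ^ m * (1 - X)^(k+1))
        = (((k:ℝ)+1) * ((m+1).factorial * k.factorial / (m + 1 + k + 1).factorial)) / ((m:ℝ)+1) := by
      field_simp at hibp ⊢
      linarith
    rw [key]
    have harr : m + 1 + k + 1 = m + (k+1) + 1 := by omega
    rw [harr]
    rw [Nat.factorial_succ (m), Nat.factorial_succ k]
    have hfac : ((m + (k+1) + 1).factorial : ℝ) ≠ 0 := by positivity
    push_cast
    field_simp

noncomputable def nu (n : ℕ) : ℝ := I (L n * L n)

lemma deriv2n (n : ℕ) : derivative^[2*n] (W n) = Polynomial.C (((2*n).factorial : ℝ)) := by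
  have hdeg : (derivative^[2*n] (W n)).natDegree ≤ 0 := by
    have := natDegree_iterate_derivative (W n) (2*n)
    rwa [W_natDegree, Nat.sub_self] at this
  rw [Polynomial.eq_C_of_natDegree_le_zero hdeg]
  congr 1
  rw [Polynomial.coeff_iterate_derivative, zero_add, Nat.descFactorial_self]
  have : (W n).coeff (2*n) = 1 := by
    have := (W_monic n).leadingCoeff
    rwa [Polynomial.leadingCoeff, W_natDegree] at this
  rw [this, nsmul_eq_mul, mul_one]

lemma I_W (n : ℕ) : I (W n) = (-1:ℝ)^n * ((n.factorial : ℝ) * n.factorial / (n + n + 1).factorial) := by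
  have hW : W n = Polynomial.C ((-1:ℝ)^n) * (X ^ n * (1 - X) ^ n) := by
    rw [W_eq]
    rw [show (Polynomial.C ((-1:ℝ)^n)) = (-1 : ℝ[X])^n by simp]
    rw [show ((X : ℝ[X]) - Polynomial.C 1) = (-1) * (1 - X) by rw [map_one]; ring]
    rw [mul_pow]
    ring
  rw [hW, I_smul, beta]

lemma nu_eq (n : ℕ) : nu n = (n.factorial : ℝ)^2 / (2*n+1) := by
  have h := I_ibp_iter n (L n) n le_rfl
  rw [Nat.sub_self] at h
  simp only [Function.iterate_zero_apply] at h
  have hLL : derivative^[n] (L n) = Polynomial.C (((2*n).factorial : ℝ)) := by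
    rw [L, ← Function.iterate_add_apply, ← two_mul, deriv2n]
  rw [hLL] at h
  rw [mul_comm (W n) _, I_smul, I_W] at h
  have hsq : (-1:ℝ)^n * (-1:ℝ)^n = 1 := by
    rw [← pow_add, ← two_mul, pow_mul]; norm_num
  have hfact : ((n + n + 1).factorial : ℝ) = (2*n+1) * (2*n).factorial := by
    rw [show n + n + 1 = (2*n) + 1 by ring, Nat.factorial_succ]
    push_cast; ring
  rw [nu, h, hfact,
    show ∀ a b : ℝ, (-1:ℝ)^n * (a * ((-1)^n * b)) = ((-1:ℝ)^n*(-1:ℝ)^n) * (a*b) from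
      fun a b => by ring, hsq, one_mul]
  have h1 : ((2*n).factorial : ℝ) ≠ 0 := by positivity
  have h2 : ((2:ℝ)*n+1) ≠ 0 := by positivity
  field_simp

lemma nu_pos (n : ℕ) : 0 < nu n := by
  rw [nu_eq]
  positivity

lemma L_zero : L 0 = 1 := by simp [L, W]

lemma cross_lt {j k : ℕ} (hjk : j < k) :
    I (derivative (L k) * L j)
      = (k.factorial : ℝ) * j.factorial * (1 - (-1:ℝ)^(k+j)) := by
  rw [I_ibp]
  have horth : I (L k * derivative (L j)) = 0 := by
    apply orth
    have h1 := Polynomial.natDegree_derivative_le (L j)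
    have h2 := L_natDegree j
    omega
  rw [horth, L_eval_one, L_eval_zero, L_eval_one, L_eval_zero, sub_zero, pow_add]
  ring

lemma cross_ge {j k : ℕ} (hjk : k ≤ j) : I (derivative (L k) * L j) = 0 := by
  rcases Nat.eq_zero_or_pos k with hk | hk
  · subst hk
    rw [L_zero]
    simp [I]
  · rw [mul_comm]
    apply orth
    have h1 := Polynomial.natDegree_derivative_le (L k)
    have h2 := L_natDegree k
    omega

lemma L_coeff_self (n : ℕ) : (L n).coeff n = ((n + n).descFactorial n : ℝ) := by
  rw [L, Polynomial.coeff_iterate_derivative]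
  have : (W n).coeff (n + n) = 1 := by
    have := (W_monic n).leadingCoeff
    rwa [Polynomial.leadingCoeff, W_natDegree, two_mul] at this
  rw [this, nsmul_eq_mul, mul_one]

lemma L_span : ∀ n : ℕ, ∀ q : ℝ[X], q.natDegree ≤ n →
    ∃ c : ℕ → ℝ, q = ∑ k ∈ Finset.range (n+1), Polynomial.C (c k) * L k := by
  intro n
  induction n with
  | zero =>
    intro q hq
    refine ⟨fun _ => q.coeff 0, ?_⟩
    rw [Finset.sum_range_one, L_zero, mul_one, ← Polynomial.eq_C_of_natDegree_le_zero hq]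
  | succ n ih =>
    intro q hq
    set D : ℝ := ((n + 1 + (n + 1)).descFactorial (n + 1) : ℝ) with hD
    have hDne : D ≠ 0 := by
      rw [hD]
      exact Nat.cast_ne_zero.mpr (by rw [Ne, Nat.descFactorial_eq_zero_iff_lt]; omega)
    set t : ℝ := q.coeff (n+1) / D with ht
    set q' : ℝ[X] := q - Polynomial.C t * L (n+1) with hq'
    have hq'deg : q'.natDegree ≤ n := by
      rw [Polynomial.natDegree_le_iff_coeff_eq_zero]
      intro N hN
      rw [hq', Polynomial.coeff_sub, Polynomial.coeff_C_mul]
      rcases Nat.lt_or_ge N (n+2) with hN2 | hN2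
      · have hNe : N = n + 1 := by omega
        subst hNe
        rw [L_coeff_self, ht, ← hD, div_mul_cancel₀ _ hDne, sub_self]
      · have hz1 : q.coeff N = 0 := Polynomial.coeff_eq_zero_of_natDegree_lt (by omega)
        have hz2 : (L (n+1)).coeff N = 0 :=
          Polynomial.coeff_eq_zero_of_natDegree_lt (lt_of_le_of_lt (L_natDegree (n+1)) (by omega))
        rw [hz1, hz2, mul_zero, sub_zero]
    obtain ⟨c, hc⟩ := ih q' hq'deg
    refine ⟨Function.update c (n+1) t, ?_⟩
    rw [Finset.sum_range_succ, Function.update_self]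
    have hsum : (∑ k ∈ Finset.range (n+1),
        Polynomial.C (Function.update c (n+1) t k) * L k)
        = ∑ k ∈ Finset.range (n+1), Polynomial.C (c k) * L k := by
      apply Finset.sum_congr rfl
      intro k hk
      rw [Function.update_of_ne (by simp at hk; omega)]
    rw [hsum, ← hc, hq']
    ring

lemma expansion_coeff {m : ℕ} (a : ℕ → ℝ) {j : ℕ} (hj : j ∈ Finset.range m) :
    I ((∑ k ∈ Finset.range m, Polynomial.C (a k) * L k) * L j) = a j * nu j := by
  rw [Finset.sum_mul, I_sum, Finset.sum_eq_single j]
  · rw [mul_assoc, I_smul, nu]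
  · intro k _ hne
    rw [mul_assoc, I_smul, orth' hne, mul_zero]
  · intro h
    exact absurd hj h

lemma parseval {m : ℕ} (a : ℕ → ℝ) :
    I ((∑ k ∈ Finset.range m, Polynomial.C (a k) * L k)
        * (∑ k ∈ Finset.range m, Polynomial.C (a k) * L k))
      = ∑ k ∈ Finset.range m, (a k)^2 * nu k := by
  set f : ℝ[X] := ∑ k ∈ Finset.range m, Polynomial.C (a k) * L k with hf
  conv_lhs => rw [hf, Finset.sum_mul]
  rw [I_sum]
  apply Finset.sum_congr rfl
  intro k hk
  have : Polynomial.C (a k) * L k * f = Polynomial.C (a k) * (f * L k) := by ring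
  rw [this, I_smul, expansion_coeff a hk]
  ring

lemma sum_odd (p : ℕ) : (∑ j ∈ Finset.range p, (2*(j:ℝ)+1)) = (p:ℝ)^2 := by
  induction p with
  | zero => simp
  | succ n ih => rw [Finset.sum_range_succ, ih]; push_cast; ring

lemma I_sq_nonneg (q : ℝ[X]) : 0 ≤ I (q * q) := by
  rw [I]
  apply intervalIntegral.integral_nonneg (by norm_num)
  intro u _
  rw [Polynomial.eval_mul]
  exact mul_self_nonneg _

lemma main01 {p : ℕ} (hp : 1 ≤ p) (f : ℝ[X]) (hf : f.natDegree ≤ p) :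
    I (derivative f * derivative f) ≤ 12 * (p:ℝ)^4 * I (f * f) := by
  obtain ⟨a, ha⟩ := L_span p f hf
  have hS : I (f * f) = ∑ k ∈ Finset.range (p+1), (a k)^2 * nu k := by
    conv_lhs => rw [ha]
    exact parseval a
  have hSnn : 0 ≤ I (f * f) := I_sq_nonneg f
  have hfd : (derivative f).natDegree ≤ p - 1 := by
    have := Polynomial.natDegree_derivative_le f
    omega
  obtain ⟨e, he⟩ := L_span (p-1) (derivative f) hfd
  rw [show p - 1 + 1 = p from by omega] at he
  have hT : I (derivative f * derivative f) = ∑ j ∈ Finset.range p, (e j)^2 * nu j := by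
    conv_lhs => rw [he]
    exact parseval e
  have hcoeff : ∀ j ∈ Finset.range p, e j * nu j
      = ∑ k ∈ Finset.Ioc j p, a k * I (derivative (L k) * L j) := by
    intro j hj
    have h1 : e j * nu j = I (derivative f * L j) := by
      conv_rhs => rw [he]
      exact (expansion_coeff e hj).symm
    have h2 : derivative f
        = ∑ k ∈ Finset.range (p+1), Polynomial.C (a k) * derivative (L k) := by
      conv_lhs => rw [ha]
      rw [Polynomial.derivative_sum]
      exact Finset.sum_congr rfl fun k _ => Polynomial.derivative_C_mul _ _
    rw [h1, h2, Finset.sum_mul, I_sum]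
    have h3 : ∀ k, I (Polynomial.C (a k) * derivative (L k) * L j)
        = a k * I (derivative (L k) * L j) := fun k => by rw [mul_assoc, I_smul]
    simp_rw [h3]
    refine (Finset.sum_subset (fun k hk => Finset.mem_range.mpr ?_) ?_).symm
    · simp only [Finset.mem_Ioc] at hk
      omega
    · intro k hk1 hk2
      simp only [Finset.mem_range] at hk1
      simp only [Finset.mem_Ioc, not_and, not_le] at hk2
      have hkj : k ≤ j := by omega
      rw [cross_ge hkj, mul_zero]
  have hbound : ∀ j ∈ Finset.range p, (e j)^2 * nu j
      ≤ 4 * (p:ℝ) * (2*(p:ℝ)+1) * (2*(j:ℝ)+1) * I (f * f) := by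
    intro j hj
    have hjp : j < p := Finset.mem_range.mp hj
    have hν := nu_pos j
    have key : (e j * nu j)^2
        ≤ (p:ℝ) * (4 * ((j.factorial:ℝ))^2 * (2*(p:ℝ)+1)) * I (f * f) := by
      rw [hcoeff j hj]
      have step1 : (∑ k ∈ Finset.Ioc j p, a k * I (derivative (L k) * L j))^2
          ≤ ((Finset.Ioc j p).card : ℝ)
            * ∑ k ∈ Finset.Ioc j p, (a k * I (derivative (L k) * L j))^2 :=
        sq_sum_le_card_mul_sum_sq
      have step2 : ∀ k ∈ Finset.Ioc j p, (a k * I (derivative (L k) * L j))^2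
          ≤ 4 * ((j.factorial:ℝ))^2 * (2*(p:ℝ)+1) * ((a k)^2 * nu k) := by
        intro k hk
        simp only [Finset.mem_Ioc] at hk
        rw [cross_lt hk.1]
        have habs : (1 - (-1:ℝ)^(k+j))^2 ≤ 4 := by
          rcases Nat.even_or_odd (k+j) with hev | hod
          · rw [hev.neg_one_pow]; norm_num
          · rw [hod.neg_one_pow]; norm_num
        have hkfac : ((k.factorial:ℝ))^2 = nu k * (2*(k:ℝ)+1) := by
          rw [nu_eq]
          have : (2*(k:ℝ)+1) ≠ 0 := by positivity
          field_simp
        have hknn : (0:ℝ) ≤ (a k)^2 * nu k := by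
          have := nu_pos k
          positivity
        have h2k : (2*(k:ℝ)+1) ≤ (2*(p:ℝ)+1) := by
          have : (k:ℝ) ≤ (p:ℝ) := by exact_mod_cast hk.2
          linarith
        calc (a k * ((k.factorial:ℝ) * (j.factorial:ℝ) * (1 - (-1:ℝ)^(k+j))))^2
            = (a k)^2 * ((k.factorial:ℝ))^2 * ((j.factorial:ℝ))^2 * (1 - (-1:ℝ)^(k+j))^2 := by
              ring
          _ ≤ (a k)^2 * ((k.factorial:ℝ))^2 * ((j.factorial:ℝ))^2 * 4 := by
              apply mul_le_mul_of_nonneg_left habs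
              positivity
          _ = 4 * ((j.factorial:ℝ))^2 * (2*(k:ℝ)+1) * ((a k)^2 * nu k) := by
              rw [hkfac]; ring
          _ ≤ 4 * ((j.factorial:ℝ))^2 * (2*(p:ℝ)+1) * ((a k)^2 * nu k) := by
              apply mul_le_mul_of_nonneg_right _ hknn
              have hjf : (0:ℝ) ≤ ((j.factorial:ℝ))^2 := by positivity
              nlinarith
      have step3 : ∑ k ∈ Finset.Ioc j p, (a k * I (derivative (L k) * L j))^2
          ≤ 4 * ((j.factorial:ℝ))^2 * (2*(p:ℝ)+1)
            * ∑ k ∈ Finset.Ioc j p, ((a k)^2 * nu k) := by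
        rw [Finset.mul_sum]
        exact Finset.sum_le_sum step2
      have step4 : ∑ k ∈ Finset.Ioc j p, ((a k)^2 * nu k)
          ≤ ∑ k ∈ Finset.range (p+1), ((a k)^2 * nu k) := by
        apply Finset.sum_le_sum_of_subset_of_nonneg
        · intro k hk
          simp only [Finset.mem_Ioc] at hk
          exact Finset.mem_range.mpr (by omega)
        · intro k _ _
          have := nu_pos k
          positivity
      have hcard : ((Finset.Ioc j p).card : ℝ) ≤ (p:ℝ) := by
        rw [Nat.card_Ioc]
        exact_mod_cast Nat.sub_le p j
      have hnn1 : (0:ℝ) ≤ ∑ k ∈ Finset.Ioc j p, (a k * I (derivative (L k) * L j))^2 :=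
        Finset.sum_nonneg fun k _ => sq_nonneg _
      calc (∑ k ∈ Finset.Ioc j p, a k * I (derivative (L k) * L j))^2
          ≤ ((Finset.Ioc j p).card : ℝ)
            * ∑ k ∈ Finset.Ioc j p, (a k * I (derivative (L k) * L j))^2 := step1
        _ ≤ (p:ℝ) * ∑ k ∈ Finset.Ioc j p, (a k * I (derivative (L k) * L j))^2 :=
            mul_le_mul_of_nonneg_right hcard hnn1
        _ ≤ (p:ℝ) * (4 * ((j.factorial:ℝ))^2 * (2*(p:ℝ)+1)
              * ∑ k ∈ Finset.Ioc j p, ((a k)^2 * nu k)) := by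
            apply mul_le_mul_of_nonneg_left step3 (by positivity)
        _ ≤ (p:ℝ) * (4 * ((j.factorial:ℝ))^2 * (2*(p:ℝ)+1)
              * ∑ k ∈ Finset.range (p+1), ((a k)^2 * nu k)) := by
            apply mul_le_mul_of_nonneg_left _ (by positivity)
            apply mul_le_mul_of_nonneg_left step4 (by positivity)
        _ = (p:ℝ) * (4 * ((j.factorial:ℝ))^2 * (2*(p:ℝ)+1)) * I (f * f) := by
            rw [← hS]; ring
    have hrw : (e j)^2 * nu j = (e j * nu j)^2 / nu j := by
      field_simp
    rw [hrw, div_le_iff₀ hν]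
    calc (e j * nu j)^2
        ≤ (p:ℝ) * (4 * ((j.factorial:ℝ))^2 * (2*(p:ℝ)+1)) * I (f * f) := key
      _ = 4 * (p:ℝ) * (2*(p:ℝ)+1) * (2*(j:ℝ)+1) * I (f * f) * nu j := by
          rw [nu_eq]
          have h1 : (2*(j:ℝ)+1) ≠ 0 := by positivity
          field_simp
  rw [hT]
  have hfinal : ∑ j ∈ Finset.range p, (e j)^2 * nu j
      ≤ ∑ j ∈ Finset.range p, 4 * (p:ℝ) * (2*(p:ℝ)+1) * (2*(j:ℝ)+1) * I (f * f) :=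
    Finset.sum_le_sum hbound
  have hpull : ∑ j ∈ Finset.range p, 4 * (p:ℝ) * (2*(p:ℝ)+1) * (2*(j:ℝ)+1) * I (f * f)
      = 4 * (p:ℝ) * (2*(p:ℝ)+1) * (p:ℝ)^2 * I (f * f) := by
    have : ∀ j, 4 * (p:ℝ) * (2*(p:ℝ)+1) * (2*(j:ℝ)+1) * I (f * f)
        = (4 * (p:ℝ) * (2*(p:ℝ)+1) * I (f * f)) * (2*(j:ℝ)+1) := fun j => by ring
    simp_rw [this]
    rw [← Finset.mul_sum, sum_odd]
    ring
  have hp1 : (1:ℝ) ≤ (p:ℝ) := by exact_mod_cast hp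
  calc ∑ j ∈ Finset.range p, (e j)^2 * nu j
      ≤ 4 * (p:ℝ) * (2*(p:ℝ)+1) * (p:ℝ)^2 * I (f * f) := by rw [← hpull]; exact hfinal
    _ ≤ 12 * (p:ℝ)^4 * I (f * f) := by
        have hco : 4 * (p:ℝ) * (2*(p:ℝ)+1) * (p:ℝ)^2 ≤ 12 * (p:ℝ)^4 := by
          nlinarith [hp1, mul_le_mul_of_nonneg_left (mul_le_mul_of_nonneg_left hp1 (le_trans zero_le_one hp1)) (mul_nonneg (le_trans zero_le_one hp1) (le_trans zero_le_one hp1)), pow_le_pow_left₀ (le_trans zero_le_one hp1) (le_refl (p:ℝ)) 3, mul_le_mul_of_nonneg_right hp1 (pow_nonneg (le_trans zero_le_one hp1) 3)]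
        exact mul_le_mul_of_nonneg_right hco hSnn

end Stmt8Aux

/-- One-dimensional polynomial inverse estimate (Lemma 3.9, estimate (3.9a)):
there is a constant `C > 0` such that for every `p ≥ 1`, every interval
`(a, b)` and every polynomial `f` of degree at most `p`,
`∫_a^b f'(t)² dt ≤ C p⁴ (b − a)⁻² ∫_a^b f(t)² dt`, where `f'` is the
derivative polynomial of `f`. -/
theorem stmt8 :
    ∃ C : ℝ, 0 < C ∧
      ∀ p : ℕ, 1 ≤ p → ∀ a b : ℝ, a < b → ∀ f : Polynomial ℝ, f.natDegree ≤ p →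
        (∫ t in a..b, ((Polynomial.derivative f).eval t) ^ 2) ≤
          C * (p : ℝ) ^ 4 * ((b - a) ^ 2)⁻¹ * ∫ t in a..b, (f.eval t) ^ 2 := by
  refine ⟨12, by norm_num, ?_⟩
  intro p hp a b hab f hdeg
  set c : ℝ := b - a with hc
  have hcpos : 0 < c := by rw [hc]; linarith
  have hcne : c ≠ 0 := ne_of_gt hcpos
  set aff : Polynomial ℝ := Polynomial.C c * Polynomial.X + Polynomial.C a with haff
  have haffd : aff.natDegree = 1 := Polynomial.natDegree_linear hcne
  have haffder : Polynomial.derivative aff = Polynomial.C c := by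
    rw [haff]
    simp
  have haffev : ∀ x : ℝ, aff.eval x = c * x + a := by
    intro x
    rw [haff]
    simp
  set g := f.comp aff with hg
  have hgdeg : g.natDegree ≤ p := by
    rw [hg, Polynomial.natDegree_comp, haffd, mul_one]
    exact hdeg
  have hmain := Stmt8Aux.main01 hp g hgdeg
  have hgder : Polynomial.derivative g
      = (Polynomial.derivative f).comp aff * Polynomial.C c := by
    rw [hg, Polynomial.derivative_comp, haffder]
    exact mul_comm _ _
  have hchg : ∀ q : Polynomial ℝ, Stmt8Aux.I (q.comp aff * q.comp aff)
      = c⁻¹ * ∫ t in a..b, (q.eval t)^2 := by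
    intro q
    have h1 : Stmt8Aux.I (q.comp aff * q.comp aff)
        = ∫ x in (0:ℝ)..1, (fun t => (q.eval t)^2) (c * x + a) := by
      rw [Stmt8Aux.I]
      apply intervalIntegral.integral_congr
      intro x _
      simp [Polynomial.eval_mul, Polynomial.eval_comp, haffev, sq]
    rw [h1, intervalIntegral.integral_comp_mul_add (fun t => (q.eval t)^2) hcne a]
    rw [show c * 0 + a = a from by ring, show c * 1 + a = b from by rw [hc]; ring]
    rw [smul_eq_mul]
  have hL : Stmt8Aux.I (Polynomial.derivative g * Polynomial.derivative g)
      = c * c * (c⁻¹ * ∫ t in a..b, ((Polynomial.derivative f).eval t)^2) := by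
    have hprod : Polynomial.derivative g * Polynomial.derivative g
        = Polynomial.C (c * c) * ((Polynomial.derivative f).comp aff
            * (Polynomial.derivative f).comp aff) := by
      rw [hgder, map_mul]
      ring
    rw [hprod, Stmt8Aux.I_smul, hchg]
  have hR : Stmt8Aux.I (g * g) = c⁻¹ * ∫ t in a..b, (f.eval t)^2 := by
    rw [hg, hchg]
  rw [hL, hR] at hmain
  set A : ℝ := ∫ t in a..b, ((Polynomial.derivative f).eval t)^2 with hA
  set B : ℝ := ∫ t in a..b, (f.eval t)^2 with hB
  rw [← mul_le_mul_iff_right₀ hcpos]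
  have heq1 : c * A = c * c * (c⁻¹ * A) := by
    field_simp
  have heq2 : c * (12 * (p:ℝ)^4 * (((b-a))^2)⁻¹ * B) = 12 * (p:ℝ)^4 * (c⁻¹ * B) := by
    rw [← hc]
    field_simp
  rw [heq1, heq2]
  exact hmain
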